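/- arXiv:1108.4904 — 4 statements merged into one kernel-verified Lean document; each statement's English description precedes it below -/
import Mathlib

section
/- Let k ≥ 3 and n = 2k+1. In the triangle group Δ(2,3,n) = ⟨α, u, v | α^n = u³ = v² = αuv = 1⟩, set a = α² and b = u²α²u. Then vα²v = u²α²u, α = a^{k+1}, v = a^k b^k a^k, and u = a⁻¹ b^k a^k; consequently the subgroup of Δ(2,3,n) generated by the three elements a = α², b = u²α²u, and c = uα²u² is the whole group Δ(2,3,n). -/
/-- Relators of the triangle group `Δ(2,3,n)` in the presentation
`⟨α, u, v | α^n = u³ = v² = αuv = 1⟩` (generators `0 ↦ α`, `1 ↦ u`, `2 ↦ v`). -/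
def tri23Rels (n : ℕ) : Set (FreeGroup (Fin 3)) :=
  {(FreeGroup.of 0) ^ n, (FreeGroup.of 1) ^ 3, (FreeGroup.of 2) ^ 2,
   FreeGroup.of 0 * FreeGroup.of 1 * FreeGroup.of 2}

/-- The triangle group `Δ(2,3,n) = ⟨α, u, v | α^n = u³ = v² = αuv = 1⟩`. -/
abbrev Tri23 (n : ℕ) := PresentedGroup (tri23Rels n)

lemma tri23_rel_one {n : ℕ} {r : FreeGroup (Fin 3)} (hr : r ∈ tri23Rels n) :
    PresentedGroup.mk (tri23Rels n) r = 1 :=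
  (QuotientGroup.eq_one_iff _).2 (Subgroup.subset_normalClosure hr)

lemma tri23_alpha_pow (n : ℕ) : (PresentedGroup.of 0 : Tri23 n) ^ n = 1 := by
  have := tri23_rel_one (n := n) (r := (FreeGroup.of 0) ^ n) (by left; rfl)
  rwa [map_pow] at this

lemma tri23_u_pow (n : ℕ) : (PresentedGroup.of 1 : Tri23 n) ^ 3 = 1 := by
  have := tri23_rel_one (n := n) (r := (FreeGroup.of 1) ^ 3) (by right; left; rfl)
  rwa [map_pow] at this

lemma tri23_v_pow (n : ℕ) : (PresentedGroup.of 2 : Tri23 n) ^ 2 = 1 := by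
  have := tri23_rel_one (n := n) (r := (FreeGroup.of 2) ^ 2) (by right; right; left; rfl)
  rwa [map_pow] at this

lemma tri23_auv (n : ℕ) :
    (PresentedGroup.of 0 : Tri23 n) * PresentedGroup.of 1 * PresentedGroup.of 2 = 1 := by
  have := tri23_rel_one (n := n)
    (r := FreeGroup.of 0 * FreeGroup.of 1 * FreeGroup.of 2) (by right; right; right; rfl)
  rwa [map_mul, map_mul] at this

/-- For `k ≥ 3` and `n = 2k+1`, in `Δ(2,3,n) = ⟨α, u, v | α^n = u³ = v² = αuv = 1⟩`,
setting `a = α²` and `b = u²α²u` (and `c = uα²u²`), one has `vα²v = u²α²u`, `α = a^(k+1)`,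
`v = a^k b^k a^k` and `u = a⁻¹ b^k a^k`; consequently the subgroup generated by `a`, `b`, `c`
is all of `Δ(2,3,n)`. -/
theorem stmt3 (k : ℕ) (hk : 3 ≤ k) (a b c : Tri23 (2 * k + 1))
    (ha : a = (PresentedGroup.of 0) ^ 2)
    (hb : b = (PresentedGroup.of 1) ^ 2 * (PresentedGroup.of 0) ^ 2 * PresentedGroup.of 1)
    (hc : c = PresentedGroup.of 1 * (PresentedGroup.of 0) ^ 2 * (PresentedGroup.of 1) ^ 2) :
    PresentedGroup.of 2 * (PresentedGroup.of 0) ^ 2 * PresentedGroup.of 2 = b ∧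
    (PresentedGroup.of 0 : Tri23 (2 * k + 1)) = a ^ (k + 1) ∧
    (PresentedGroup.of 2 : Tri23 (2 * k + 1)) = a ^ k * b ^ k * a ^ k ∧
    (PresentedGroup.of 1 : Tri23 (2 * k + 1)) = a⁻¹ * b ^ k * a ^ k ∧
    Subgroup.closure {a, b, c} = ⊤ := by
  set α : Tri23 (2 * k + 1) := PresentedGroup.of 0 with hα
  set u : Tri23 (2 * k + 1) := PresentedGroup.of 1 with hu
  set v : Tri23 (2 * k + 1) := PresentedGroup.of 2 with hv
  have hA : α ^ (2 * k + 1) = 1 := tri23_alpha_pow _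
  have hU : u ^ 3 = 1 := tri23_u_pow _
  have hV : v ^ 2 = 1 := tri23_v_pow _
  have hAUV : α * u * v = 1 := tri23_auv _
  -- basic consequences
  have e3 : u⁻¹ = u * u := by
    have : (u * u) * u = 1 := by rw [← hU, pow_succ, sq]
    exact (eq_inv_of_mul_eq_one_left this).symm
  have evv : v⁻¹ = v := by
    have : v * v = 1 := by rw [← sq]; exact hV
    exact (eq_inv_of_mul_eq_one_left this).symm
  have hv1 : v = u⁻¹ * α⁻¹ := by
    have : (α * u) * v = 1 := hAUV
    have := eq_inv_of_mul_eq_one_right this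
    rw [this]; group
  have hv2 : v = α * u := by
    have h : (α * u) * v = 1 := hAUV
    have := eq_inv_of_mul_eq_one_left h
    rw [← evv, this]
  have e4 : α ^ (2 * k) = α⁻¹ := by
    have : α ^ (2 * k) * α = 1 := by rw [← pow_succ]; exact hA
    exact eq_inv_of_mul_eq_one_left this
  -- claim 1
  have claim1 : v * α ^ 2 * v = b := by
    rw [hb]
    nth_rewrite 1 [hv1]
    nth_rewrite 1 [hv2]
    rw [e3]
    simp only [sq]
    group
  -- claim 2
  have claim2 : α = a ^ (k + 1) := by
    rw [ha, ← pow_mul, show 2 * (k + 1) = (2 * k + 1) + 1 by ring, pow_succ, hA, one_mul]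
  -- a^k = α⁻¹
  have hak : a ^ k = α⁻¹ := by rw [ha, ← pow_mul, e4]
  -- b^k = v * α⁻¹ * v
  have hbk : b ^ k = v * α⁻¹ * v := by
    have h1 : b = v * α ^ 2 * v⁻¹ := by rw [evv]; exact claim1.symm
    rw [h1, conj_pow, ← pow_mul, e4, evv]
  -- key relation
  have key : α * u * α = u * u := by
    have h : α * u = u⁻¹ * α⁻¹ := hv2.symm.trans hv1
    rw [e3] at h
    rw [h]; group
  -- claim 3
  have claim3 : v = a ^ k * b ^ k * a ^ k := by
    rw [hak, hbk]
    nth_rewrite 1 [hv1]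
    rw [hv2, e3]
    group
  -- claim 4
  have claim4 : u = a⁻¹ * b ^ k * a ^ k := by
    rw [hak, hbk, ha, hv2]
    have h2 : (α ^ 2)⁻¹ * (α * u * α⁻¹ * (α * u)) * α⁻¹ = α⁻¹ * (u * u) * α⁻¹ := by group
    rw [h2, ← key]
    group
  refine ⟨claim1, claim2, claim3, claim4, ?_⟩
  -- closure
  have hamem : a ∈ Subgroup.closure {a, b, c} := Subgroup.subset_closure (by simp)
  have hbmem : b ∈ Subgroup.closure {a, b, c} := Subgroup.subset_closure (by simp)
  have h0 : α ∈ Subgroup.closure {a, b, c} := claim2 ▸ pow_mem hamem _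
  have h2 : v ∈ Subgroup.closure {a, b, c} :=
    claim3 ▸ mul_mem (mul_mem (pow_mem hamem _) (pow_mem hbmem _)) (pow_mem hamem _)
  have h1 : u ∈ Subgroup.closure {a, b, c} :=
    claim4 ▸ mul_mem (mul_mem (inv_mem hamem) (pow_mem hbmem _)) (pow_mem hamem _)
  apply le_antisymm le_top
  rw [← PresentedGroup.closure_range_of (tri23Rels (2 * k + 1))]
  apply (Subgroup.closure_le _).2
  rintro x ⟨i, rfl⟩
  fin_cases i
  · exact h0
  · exact h1
  · exact h2
end

section
/- Let q be a primitive n-th root of unity with n ∉ {1,2,3,4,5,6} (equivalently, −q is not a primitive root of unity of order belonging to {1,2,3,4,6,10}). Then the group Γ(q) is infinite. -/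
open Matrix

/-- The matrix `A(q)` (image of `g₁²` under the reduced Burau representation `β₋q`),
as an element of `GL(2,ℂ)` (junk value `1` if `q = 0`). -/
noncomputable def AGL (q : ℂ) : GL (Fin 2) ℂ :=
  if h : q = 0 then 1 else
    Matrix.GeneralLinearGroup.mkOfDetNeZero !![q ^ 2, 1 + q; 0, 1]
      (by rw [Matrix.det_fin_two_of]; simpa using pow_ne_zero 2 h)

/-- The matrix `B(q)` (image of `g₂²` under the reduced Burau representation `β₋q`),
as an element of `GL(2,ℂ)` (junk value `1` if `q = 0`). -/
noncomputable def BGL (q : ℂ) : GL (Fin 2) ℂ :=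
  if h : q = 0 then 1 else
    Matrix.GeneralLinearGroup.mkOfDetNeZero !![1, 0; -q - q ^ 2, q ^ 2]
      (by rw [Matrix.det_fin_two_of]; simpa using pow_ne_zero 2 h)

/-- `PGL(2,ℂ)`: the quotient of `GL(2,ℂ)` by its center. -/
abbrev PGL2 : Type := GL (Fin 2) ℂ ⧸ Subgroup.center (GL (Fin 2) ℂ)

/-- The canonical projection `GL(2,ℂ) → PGL(2,ℂ)`. -/
noncomputable def pgl : GL (Fin 2) ℂ →* PGL2 := QuotientGroup.mk' _

/-- The class `[A(q)] ∈ PGL(2,ℂ)`. -/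
noncomputable def Apr (q : ℂ) : PGL2 := pgl (AGL q)

/-- The class `[B(q)] ∈ PGL(2,ℂ)`. -/
noncomputable def Bpr (q : ℂ) : PGL2 := pgl (BGL q)

/-- The group `Γ(q) = Γ₋q ⊆ PGL(2,ℂ)` generated by `[A(q)]` and `[B(q)]`. -/
noncomputable def Gamma (q : ℂ) : Subgroup PGL2 := Subgroup.closure {Apr q, Bpr q}

/-- Relators of the triangle group `Δ(l,m,n) = ⟨x,y | x^l = y^m = (xy)^n = 1⟩`. -/
def triangleRels (l m n : ℕ) : Set (FreeGroup (Fin 2)) :=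
  {(FreeGroup.of 0) ^ l, (FreeGroup.of 1) ^ m, (FreeGroup.of 0 * FreeGroup.of 1) ^ n}

/-- The triangle group `Δ(l,m,n)`. -/
abbrev Triangle (l m n : ℕ) := PresentedGroup (triangleRels l m n)


set_option maxHeartbeats 1000000

section AuxiliaryLemmas

open Complex Polynomial IntermediateField


lemma abs_eq_one_of_pow (ω : ℂ) (N : ℕ) (hN : 0 < N) (h : ω ^ N = 1) : ‖ω‖ = 1 := by
  have h1 : ‖ω‖ ^ N = 1 := by
    rw [← norm_pow, h, norm_one]
  rcases lt_trichotomy (‖ω‖) 1 with hlt | heq | hgt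
  · have := pow_lt_one₀ (norm_nonneg ω) hlt hN.ne'
    simp [h1] at this
  · exact heq
  · have := one_lt_pow₀ hgt hN.ne'
    simp [h1] at this

lemma key (n : ℕ) (hn7 : 7 ≤ n) (q μ : ℂ) (hq : IsPrimitiveRoot q n)
    (e : ℕ) (he : 0 < e) (hμ : μ ^ e = 1) :
    μ + μ⁻¹ ≠ (q + q⁻¹) ^ 2 + (q + q⁻¹) := by
  intro heq
  have hn0 : 0 < n := by omega
  set N := n * e with hNdef
  have hN0 : 0 < N := Nat.mul_pos hn0 he
  haveI : NeZero N := ⟨hN0.ne'⟩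
  set ζ := Complex.exp (2 * Real.pi * Complex.I / N) with hζdef
  have hζ : IsPrimitiveRoot ζ N := Complex.isPrimitiveRoot_exp N hN0.ne'
  have hqN : q ^ N = 1 := by rw [hNdef, pow_mul, hq.pow_eq_one, one_pow]
  have hμN : μ ^ N = 1 := by rw [hNdef, mul_comm, pow_mul, hμ, one_pow]
  obtain ⟨a, haN, haq⟩ := hζ.eq_pow_of_pow_eq_one hqN
  obtain ⟨b, hbN, hbμ⟩ := hζ.eq_pow_of_pow_eq_one hμN
  -- order computations
  have ha0 : a ≠ 0 := by
    rintro rfl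
    have : n = 1 := by
      have := hq.eq_orderOf
      rw [← haq, pow_zero, orderOf_one] at this
      omega
    omega
  have hordζ : orderOf ζ = N := hζ.eq_orderOf.symm
  have hordq : orderOf q = n := hq.eq_orderOf.symm
  have hord : n = N / Nat.gcd N a := by
    rw [← hordq, ← haq, orderOf_pow' ζ ha0, hordζ]
  have hgcd : Nat.gcd N a = e := by
    have hdvd : Nat.gcd N a ∣ N := Nat.gcd_dvd_left N a
    have : n * Nat.gcd N a = N := by
      rw [hord]; exact Nat.div_mul_cancel hdvd
    have := this.trans hNdef
    exact Nat.eq_of_mul_eq_mul_left hn0 this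
  have hea : e ∣ a := hgcd ▸ Nat.gcd_dvd_right N a
  obtain ⟨a₁, ha1⟩ := hea
  have hcop : Nat.Coprime n a₁ := by
    have : Nat.gcd (e * n) (e * a₁) = e * Nat.gcd n a₁ := Nat.gcd_mul_left e n a₁
    rw [mul_comm e n, ← hNdef, ← ha1, hgcd] at this
    have : e * Nat.gcd n a₁ = e * 1 := by omega
    exact Nat.eq_of_mul_eq_mul_left he this
  -- find k coprime to N with a₁ * k ≡ 1 [MOD n]
  have hnN : n ∣ N := ⟨e, rfl⟩
  obtain ⟨u, hu⟩ := ZMod.unitsMap_surjective hnN ((ZMod.unitOfCoprime a₁ hcop.symm)⁻¹)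
  set k := ((u : ZMod N)).val with hkdef
  have hkcop : Nat.Coprime k N := ZMod.val_coe_unit_coprime u
  have hmod : (a₁ * k : ℕ) ≡ 1 [MOD n] := by
    have h1 : ((k : ℕ) : ZMod n) = ((ZMod.unitOfCoprime a₁ hcop.symm)⁻¹ : (ZMod n)ˣ) := by
      have := congrArg (Units.val) hu
      rw [ZMod.unitsMap_def] at this
      rw [hkdef, ZMod.natCast_val]
      simpa using this
    have h2 : ((a₁ * k : ℕ) : ZMod n) = ((1 : ℕ) : ZMod n) := by
      push_cast
      rw [h1]
      have : ((ZMod.unitOfCoprime a₁ hcop.symm : (ZMod n)ˣ) : ZMod n) = (a₁ : ZMod n) :=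
        ZMod.coe_unitOfCoprime a₁ hcop.symm
      rw [← this, ← Units.val_mul, mul_inv_cancel, Units.val_one]
    exact (ZMod.natCast_eq_natCast_iff _ _ _).mp h2
  obtain ⟨t, ht⟩ : ∃ t, a₁ * k = n * t + 1 := by
    have h1n : 1 % n = 1 := Nat.mod_eq_of_lt (by omega)
    have := Nat.ModEq.symm hmod
    unfold Nat.ModEq at this
    rw [h1n] at this
    have hdm := Nat.div_add_mod (a₁ * k) n
    exact ⟨(a₁ * k) / n, by omega⟩
  -- build the algebra hom sending ζ to ζ ^ k
  set ξ := ζ ^ k with hξdef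
  have hξprim : IsPrimitiveRoot ξ N := hζ.pow_of_coprime k hkcop
  have hintZ : IsIntegral ℤ ζ := hζ.isIntegral hN0
  have hint : IsIntegral ℚ ζ := hintZ.tower_top
  have hmin : minpoly ℚ ζ = cyclotomic N ℚ := (cyclotomic_eq_minpoly_rat hζ hN0).symm
  have hmem : ξ ∈ (minpoly ℚ ζ).aroots ℂ := by
    rw [hmin, mem_aroots]
    refine ⟨cyclotomic_ne_zero N ℚ, ?_⟩
    have h := hξprim.isRoot_cyclotomic hN0
    rwa [IsRoot.def, ← map_cyclotomic N (algebraMap ℚ ℂ), eval_map, ← aeval_def] at h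
  set φ := (algHomAdjoinIntegralEquiv ℚ hint).symm ⟨ξ, hmem⟩ with hφdef
  have hφgen : φ (AdjoinSimple.gen ℚ ζ) = ξ :=
    algHomAdjoinIntegralEquiv_symm_apply_gen ℚ hint _
  set G : ℚ⟮ζ⟯ := AdjoinSimple.gen ℚ ζ with hGdef
  have hGcoe : (G : ℂ) = ζ := rfl
  -- transfer the equation into ℚ⟮ζ⟯
  have heqK : (G ^ b) + (G ^ b)⁻¹ = ((G ^ a) + (G ^ a)⁻¹) ^ 2 + ((G ^ a) + (G ^ a)⁻¹) := by
    apply Subtype.coe_injective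
    push_cast [IntermediateField.coe_inv]
    rw [hGcoe, haq, hbμ]
    exact heq
  have hφeq : φ (G ^ b) + (φ (G ^ b))⁻¹
      = (φ (G ^ a) + (φ (G ^ a))⁻¹) ^ 2 + (φ (G ^ a) + (φ (G ^ a))⁻¹) := by
    have h := congrArg φ heqK
    simpa only [map_add, map_pow, map_inv₀] using h
  rw [map_pow, map_pow, hφgen] at hφeq
  -- compute ξ ^ a = ζ ^ e
  have hka : ξ ^ a = ζ ^ e := by
    rw [hξdef, ← pow_mul, ha1, show k * (e * a₁) = e * (a₁ * k) by ring, ht,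
      show e * (n * t + 1) = N * t + e by rw [hNdef]; ring,
      pow_add, pow_mul, hζ.pow_eq_one, one_pow, one_mul]
  have hne : (n : ℂ) ≠ 0 := Nat.cast_ne_zero.mpr hn0.ne'
  have hee : (e : ℂ) ≠ 0 := Nat.cast_ne_zero.mpr he.ne'
  have hζe : ζ ^ e = Complex.exp (2 * Real.pi * Complex.I / n) := by
    rw [hζdef, ← Complex.exp_nat_mul]
    congr 1
    have hNc : (N : ℂ) = (n : ℂ) * (e : ℂ) := by rw [hNdef]; push_cast; ring
    rw [hNc]
    field_simp
  set ω := ξ ^ b with hωdef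
  have hωN : ω ^ N = 1 := by
    have h1 : ω = ζ ^ (k * b) := by rw [hωdef, hξdef, ← pow_mul]
    rw [h1, ← pow_mul, show k * b * N = N * (k * b) by ring, pow_mul, hζ.pow_eq_one, one_pow]
  have habs : ‖ω‖ = 1 := abs_eq_one_of_pow ω N hN0 hωN
  have hle : ‖ω + ω⁻¹‖ ≤ 2 := by
    calc ‖ω + ω⁻¹‖ ≤ ‖ω‖ + ‖ω⁻¹‖ := norm_add_le _ _
    _ = 2 := by rw [norm_inv, habs]; norm_num
  -- the right-hand side is 2cos θ squared plus itself
  set θ : ℝ := 2 * Real.pi / n with hθdef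
  set cr : ℝ := 2 * Real.cos θ with hcrdef
  have hθc : 2 * (Real.pi : ℂ) * Complex.I / n = (θ : ℂ) * Complex.I := by
    rw [hθdef]; push_cast; ring
  have hc : ξ ^ a + (ξ ^ a)⁻¹ = (cr : ℂ) := by
    rw [hka, hζe, hθc, ← Complex.exp_neg]
    rw [show -((θ : ℂ) * Complex.I) = ((-θ : ℝ) : ℂ) * Complex.I by push_cast; ring]
    rw [Complex.exp_mul_I, Complex.exp_mul_I]
    rw [← Complex.ofReal_cos, ← Complex.ofReal_sin, ← Complex.ofReal_cos, ← Complex.ofReal_sin,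
      Real.cos_neg, Real.sin_neg]
    push_cast
    ring_nf
    push_cast
    rw [hcrdef]; push_cast; ring
  rw [hc] at hφeq
  have habs2 : ‖ω + ω⁻¹‖ = |cr ^ 2 + cr| := by
    rw [hωdef] at hφeq ⊢
    rw [hφeq, show ((cr : ℂ)) ^ 2 + (cr : ℂ) = ((cr ^ 2 + cr : ℝ) : ℂ) by push_cast; ring,
      Complex.norm_real, Real.norm_eq_abs]
  -- numeric estimate: cr > 1
  have hπ := Real.pi_pos
  have hθpos : 0 < θ := by positivity
  have hθlt : θ < Real.pi / 3 := by
    rw [hθdef, div_lt_div_iff₀ (by exact_mod_cast hn0) (by norm_num)]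
    have h6 : (6 : ℝ) < (n : ℝ) := by exact_mod_cast (by omega : (6:ℕ) < n)
    nlinarith
  have hcos : 1 / 2 < Real.cos θ := by
    have := Real.cos_lt_cos_of_nonneg_of_le_pi hθpos.le
      (by linarith [Real.pi_pos] : Real.pi / 3 ≤ Real.pi) hθlt
    rwa [Real.cos_pi_div_three] at this
  have hcr : 1 < cr := by rw [hcrdef]; linarith
  rw [habs2, abs_of_pos (by nlinarith)] at hle
  nlinarith



lemma exists_smul_of_mem_center (x : GL (Fin 2) ℂ)
    (hx : x ∈ Subgroup.center (GL (Fin 2) ℂ)) :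
    ∃ c : ℂ, (x : Matrix (Fin 2) (Fin 2) ℂ) = c • (1 : Matrix (Fin 2) (Fin 2) ℂ) := by
  rw [Subgroup.mem_center_iff] at hx
  set X : Matrix (Fin 2) (Fin 2) ℂ := ↑x with hX
  have hU := congrArg (Units.val) (hx (Matrix.GeneralLinearGroup.mkOfDetNeZero
    !![1, 1; 0, 1] (by rw [Matrix.det_fin_two_of]; norm_num)))
  have hL := congrArg (Units.val) (hx (Matrix.GeneralLinearGroup.mkOfDetNeZero
    !![1, 0; 1, 1] (by rw [Matrix.det_fin_two_of]; norm_num)))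
  rw [Units.val_mul, Units.val_mul] at hU hL
  have hU' : !![1, 1; 0, 1] * X = X * !![1, 1; 0, 1] := hU
  have hL' : !![1, 0; 1, 1] * X = X * !![1, 0; 1, 1] := hL
  have h1 : (!![(1:ℂ), 1; 0, 1] * X) 0 0 = (X * !![(1:ℂ), 1; 0, 1]) 0 0 := by rw [hU']
  have h2 : (!![(1:ℂ), 1; 0, 1] * X) 0 1 = (X * !![(1:ℂ), 1; 0, 1]) 0 1 := by rw [hU']
  have h3 : (!![(1:ℂ), 0; 1, 1] * X) 1 1 = (X * !![(1:ℂ), 0; 1, 1]) 1 1 := by rw [hL']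
  simp [Matrix.mul_apply, Fin.sum_univ_two] at h1 h2 h3
  refine ⟨X 0 0, ?_⟩
  ext i j
  fin_cases i <;> fin_cases j <;> simp [Matrix.one_apply] <;> first | exact h3 | exact h1 | linear_combination h2

end AuxiliaryLemmas

/-- If `q` is a primitive `n`-th root of unity with `n ∉ {1,2,3,4,5,6}`,
then the group `Γ(q)` is infinite. -/
theorem stmt4 (n : ℕ) (hn0 : 0 < n) (hn : n ∉ ({1, 2, 3, 4, 5, 6} : Set ℕ))
    (q : ℂ) (hq : IsPrimitiveRoot q n) :
    Infinite ↥(Gamma q) := by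
  simp only [Set.mem_insert_iff, Set.mem_singleton_iff] at hn
  push_neg at hn
  have hn7 : 7 ≤ n := by omega
  have hq0 : q ≠ 0 := hq.ne_zero hn0.ne'
  have hb0 : (1 : ℂ) + q ≠ 0 := by
    intro h
    have hq2 : q ^ 2 = 1 := by
      have : q = -1 := by linear_combination h
      rw [this]; ring
    have := Nat.le_of_dvd (by norm_num) (hq.dvd_of_pow_eq_one 2 hq2)
    omega
  -- eigenvalue data
  set s : ℂ := (q + q⁻¹) ^ 2 + (q + q⁻¹) with hs
  clear_value s
  obtain ⟨μ₁, μ₂, hsum, hprod⟩ : ∃ μ₁ μ₂ : ℂ, μ₁ + μ₂ = s ∧ μ₁ * μ₂ = 1 := by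
    obtain ⟨r, hr⟩ := IsAlgClosed.exists_pow_nat_eq (s ^ 2 - 4) zero_lt_two
    exact ⟨(s + r) / 2, (s - r) / 2, by ring, by linear_combination (-(1:ℂ)/4) * hr⟩
  have hT : q ^ 2 * (μ₁ + μ₂) = q ^ 4 + q * (1 + q) ^ 2 + 1 := by
    rw [hsum, hs]; field_simp; ring
  have hμ₁0 : μ₁ ≠ 0 := by
    intro h; rw [h, zero_mul] at hprod; exact zero_ne_one hprod
  have hμ₂inv : μ₁⁻¹ = μ₂ := inv_eq_of_mul_eq_one_right hprod
  -- matrices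
  set Mr : Matrix (Fin 2) (Fin 2) ℂ :=
    !![q ^ 4 + q * (1 + q) ^ 2, 1 + q; q + q ^ 2, 1] with hMr
  set P : Matrix (Fin 2) (Fin 2) ℂ :=
    !![1 + q, 1 + q;
       q ^ 2 * μ₁ - (q ^ 4 + q * (1 + q) ^ 2), q ^ 2 * μ₂ - (q ^ 4 + q * (1 + q) ^ 2)] with hP
  set D : Matrix (Fin 2) (Fin 2) ℂ := Matrix.diagonal ![q ^ 2 * μ₁, q ^ 2 * μ₂] with hD
  have hchar1 : q ^ 2 * μ₁ * (q ^ 2 * μ₁) - (q ^ 4 + q * (1 + q) ^ 2 + 1) * (q ^ 2 * μ₁)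
      + q ^ 4 = 0 := by
    linear_combination (-(q ^ 4)) * hprod + (q ^ 2 * μ₁) * hT
  have hchar2 : q ^ 2 * μ₂ * (q ^ 2 * μ₂) - (q ^ 4 + q * (1 + q) ^ 2 + 1) * (q ^ 2 * μ₂)
      + q ^ 4 = 0 := by
    linear_combination (-(q ^ 4)) * hprod + (q ^ 2 * μ₂) * hT
  clear_value Mr P D
  have hMP : Mr * P = P * D := by
    rw [hMr, hP, hD]
    ext i j
    fin_cases i <;> fin_cases j <;>
      simp [Matrix.mul_apply, Fin.sum_univ_two, Matrix.diagonal]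
    · ring
    · ring
    · linear_combination (-1 : ℂ) * hchar1
    · linear_combination (-1 : ℂ) * hchar2
  have hMPk : ∀ j : ℕ, Mr ^ j * P = P * D ^ j := by
    intro j
    induction j with
    | zero => simp
    | succ j ih =>
        rw [pow_succ, pow_succ, mul_assoc, hMP, ← mul_assoc, ih, mul_assoc]
  -- GL elements
  have hdetM : Mr.det ≠ 0 := by
    rw [hMr, Matrix.det_fin_two_of,
      show (q ^ 4 + q * (1 + q) ^ 2) * 1 - (1 + q) * (q + q ^ 2) = q ^ 4 by ring]
    exact pow_ne_zero 4 hq0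
  have hdetC : (!![q ^ 2, 0; q + q ^ 2, 1] : Matrix (Fin 2) (Fin 2) ℂ).det ≠ 0 := by
    rw [Matrix.det_fin_two_of]
    simpa using pow_ne_zero 2 hq0
  set Mg : GL (Fin 2) ℂ := Matrix.GeneralLinearGroup.mkOfDetNeZero Mr hdetM with hMg
  set Cg : GL (Fin 2) ℂ :=
    Matrix.GeneralLinearGroup.mkOfDetNeZero !![q ^ 2, 0; q + q ^ 2, 1] hdetC with hCg
  have hMgAC : Mg = AGL q * Cg := by
    apply Units.ext
    rw [Units.val_mul]
    show Mr = (↑(AGL q) : Matrix (Fin 2) (Fin 2) ℂ) * !![q ^ 2, 0; q + q ^ 2, 1]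
    rw [AGL, dif_neg hq0]
    show Mr = !![q ^ 2, 1 + q; 0, 1] * !![q ^ 2, 0; q + q ^ 2, 1]
    ext i j
    fin_cases i <;> fin_cases j <;>
      simp [hMr, Matrix.mul_apply, Fin.sum_univ_two] <;> ring
  have hBC : BGL q * Cg ∈ Subgroup.center (GL (Fin 2) ℂ) := by
    have hcoe : ((BGL q * Cg : GL (Fin 2) ℂ) : Matrix (Fin 2) (Fin 2) ℂ)
        = (q ^ 2 : ℂ) • (1 : Matrix (Fin 2) (Fin 2) ℂ) := by
      have hval : ((BGL q * Cg : GL (Fin 2) ℂ) : Matrix (Fin 2) (Fin 2) ℂ)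
          = ((BGL q : GL (Fin 2) ℂ) : Matrix (Fin 2) (Fin 2) ℂ)
            * ((Cg : GL (Fin 2) ℂ) : Matrix (Fin 2) (Fin 2) ℂ) := rfl
      rw [hval, BGL, dif_neg hq0]
      show !![1, 0; -q - q ^ 2, q ^ 2] * !![q ^ 2, 0; q + q ^ 2, 1] = _
      ext i j
      fin_cases i <;> fin_cases j <;>
        simp [Matrix.mul_apply, Fin.sum_univ_two, Matrix.one_apply] <;> ring
    rw [Subgroup.mem_center_iff]
    intro g
    apply Units.ext
    show (g : Matrix (Fin 2) (Fin 2) ℂ) * ((BGL q * Cg : GL (Fin 2) ℂ) : Matrix (Fin 2) (Fin 2) ℂ)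
        = ((BGL q * Cg : GL (Fin 2) ℂ) : Matrix (Fin 2) (Fin 2) ℂ) * (g : Matrix (Fin 2) (Fin 2) ℂ)
    rw [hcoe, smul_mul_assoc, mul_smul_comm, one_mul, mul_one]
  have hCB : pgl Cg = (Bpr q)⁻¹ := by
    have h1 : pgl (BGL q * Cg) = 1 := (QuotientGroup.eq_one_iff _).mpr hBC
    rw [_root_.map_mul] at h1
    exact (inv_eq_of_mul_eq_one_right h1).symm
  have hgmem : pgl Mg ∈ Gamma q := by
    rw [hMgAC, _root_.map_mul, hCB]
    exact Subgroup.mul_mem _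
      (Subgroup.subset_closure (by left; rfl))
      (Subgroup.inv_mem _ (Subgroup.subset_closure (by right; rfl)))
  -- the element pgl Mg has infinite order
  have claim : ∀ e : ℕ, 0 < e → (pgl Mg) ^ e ≠ 1 := by
    intro e he h1
    rw [← map_pow] at h1
    have hc := (QuotientGroup.eq_one_iff _).mp h1
    obtain ⟨w, hw⟩ := exists_smul_of_mem_center _ hc
    rw [Units.val_pow_eq_pow_val] at hw
    have hMe : Mr ^ e = w • (1 : Matrix (Fin 2) (Fin 2) ℂ) := hw
    have hPD := hMPk e
    rw [hMe, smul_mul_assoc, one_mul] at hPD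
    have hDe : D ^ e = Matrix.diagonal (![q ^ 2 * μ₁, q ^ 2 * μ₂] ^ e) := by
      rw [hD, Matrix.diagonal_pow]
    have h00 : w * (1 + q) = (1 + q) * (q ^ 2 * μ₁) ^ e := by
      have h := congrFun (congrFun hPD 0) 0
      rw [hDe] at h
      simpa [hP, Matrix.mul_diagonal] using h
    have h01 : w * (1 + q) = (1 + q) * (q ^ 2 * μ₂) ^ e := by
      have h := congrFun (congrFun hPD 0) 1
      rw [hDe] at h
      simpa [hP, Matrix.mul_diagonal] using h
    have hlam : (q ^ 2 * μ₁) ^ e = (q ^ 2 * μ₂) ^ e :=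
      mul_left_cancel₀ hb0 (h00.symm.trans h01)
    have hμe : μ₁ ^ e = μ₂ ^ e := by
      rw [mul_pow, mul_pow] at hlam
      exact mul_left_cancel₀ (pow_ne_zero e (pow_ne_zero 2 hq0)) hlam
    have hμ2e : μ₁ ^ (2 * e) = 1 := by
      calc μ₁ ^ (2 * e) = μ₁ ^ e * μ₁ ^ e := by rw [two_mul, pow_add]
        _ = μ₁ ^ e * μ₂ ^ e := by rw [hμe]
        _ = 1 := by rw [← mul_pow, hprod, one_pow]
    refine key n hn7 q μ₁ hq (2 * e) (by omega) hμ2e ?_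
    rw [hμ₂inv, hsum, hs]
  refine Infinite.of_injective (fun j : ℕ => (⟨pgl Mg, hgmem⟩ : ↥(Gamma q)) ^ j) ?_
  intro i j hij
  by_contra hne
  have key2 : ∀ i j : ℕ, i < j →
      (⟨pgl Mg, hgmem⟩ : ↥(Gamma q)) ^ i = (⟨pgl Mg, hgmem⟩ : ↥(Gamma q)) ^ j → False := by
    intro i j hlt hij
    set g : ↥(Gamma q) := (⟨pgl Mg, hgmem⟩ : ↥(Gamma q)) with hg
    have h2 : g ^ (j - i) * g ^ i = g ^ j := by
      rw [← pow_add]; congr 1; omega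
    rw [← hij] at h2
    have h3 : g ^ (j - i) = 1 := by
      have := mul_right_cancel (h2.trans (one_mul (g ^ i)).symm)
      exact this
    apply claim (j - i) (by omega)
    have h4 := congrArg (Subtype.val) h3
    rw [SubgroupClass.coe_pow] at h4
    exact h4
  rcases Nat.lt_trichotomy i j with h | h | h
  · exact key2 i j h hij
  · exact hne h
  · exact key2 j i h hij.symm
end

section
/- Let F be the free group on two generators a, b. For every integer r ≥ 1, the following identity holds in F: (ab)^r a^{−r} b^{−r} = (∏_{i=1}^{r−1} ⁅a^i, b^i⁆ · ⁅b^i, a^{i+1}⁆) · ⁅a^r, b^r⁆, where the product is taken in increasing order of i. -/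
open scoped commutatorElement

private lemma aux9 {G : Type*} [Group G] (a b : G) (r : ℕ) (hr : 1 ≤ r) :
    (a * b) ^ r * (a ^ r)⁻¹ * (b ^ r)⁻¹ =
      (((List.range (r - 1)).map fun i =>
          ⁅a ^ (i + 1), b ^ (i + 1)⁆ * ⁅b ^ (i + 1), a ^ (i + 2)⁆).prod) * ⁅a ^ r, b ^ r⁆ := by
  induction r with
  | zero => omega
  | succ n ih =>
    cases n with
    | zero =>
      simp [commutatorElement_def]
    | succ m =>
      have ih' := ih (by omega)
      have h1 : m + 1 - 1 = m := by omega
      have h2 : m + 1 + 1 - 1 = m + 1 := by omega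
      rw [h1] at ih'
      rw [h2, List.range_succ, List.map_append, List.prod_append]
      simp only [List.map_cons, List.map_nil, List.prod_cons, List.prod_nil, mul_one]
      have hp : ((List.range m).map fun i =>
          ⁅a ^ (i + 1), b ^ (i + 1)⁆ * ⁅b ^ (i + 1), a ^ (i + 2)⁆).prod =
          (a * b) ^ (m + 1) * (a ^ (m + 1))⁻¹ * (b ^ (m + 1))⁻¹ * ⁅a ^ (m + 1), b ^ (m + 1)⁆⁻¹ := by
        rw [ih']; group
      rw [hp]
      simp only [commutatorElement_def, pow_succ]
      group

/-- In the free group `F` on two generators `a, b`, for every `r ≥ 1`,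
`(ab)^r a^(−r) b^(−r) = (∏_{i=1}^{r−1} ⁅a^i, b^i⁆⁅b^i, a^(i+1)⁆) ⁅a^r, b^r⁆`,
the product being taken in increasing order of `i`. -/
theorem stmt9 (r : ℕ) (hr : 1 ≤ r) (a b : FreeGroup (Fin 2))
    (ha : a = FreeGroup.of 0) (hb : b = FreeGroup.of 1) :
    (a * b) ^ r * (a ^ r)⁻¹ * (b ^ r)⁻¹ =
      (((List.range (r - 1)).map fun i =>
          ⁅a ^ (i + 1), b ^ (i + 1)⁆ * ⁅b ^ (i + 1), a ^ (i + 2)⁆).prod) * ⁅a ^ r, b ^ r⁆ := by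
  exact aux9 a b r hr
end

section
/- Let F₃ be the free group on generators x₁, x₂, x₃ and let F₆ be the free group on generators y₁, z₁, y₂, z₂, y₃, z₃. Let η : F₃ → F₆ be the group homomorphism determined by η(x_i) = ⁅y_i, z_i⁆ for i = 1, 2, 3. Then for every k ≥ 1, η maps the k-th term of the lower central series of F₃ into the 2k-th term of the lower central series of F₆: η((F₃)_{(k)}) ⊆ (F₆)_{(2k)}. -/
open scoped commutatorElement

open Subgroup

/-- Three subgroups lemma modulo a normal subgroup. -/
lemma three_subgroups {G : Type*} [Group G] (H₁ H₂ H₃ N : Subgroup G) [N.Normal]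
    (h1 : ⁅⁅H₂, H₃⁆, H₁⁆ ≤ N) (h2 : ⁅⁅H₃, H₁⁆, H₂⁆ ≤ N) : ⁅⁅H₁, H₂⁆, H₃⁆ ≤ N := by
  let f := QuotientGroup.mk' N
  have key : ∀ A B C : Subgroup G, ⁅⁅A, B⁆, C⁆ ≤ N ↔ ⁅⁅map f A, map f B⁆, map f C⁆ = ⊥ := by
    intro A B C
    rw [← map_commutator, ← map_commutator, Subgroup.map_eq_bot_iff, QuotientGroup.ker_mk']
  rw [key]
  exact Subgroup.commutator_commutator_eq_bot_of_rotate
    (by rw [← key]; exact h1) (by rw [← key]; exact h2)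

lemma lcs_comm_comm {G : Type*} [Group G] (n : ℕ) :
    ⁅(⊤ : Subgroup G).lowerCentralSeries n, (commutator G : Subgroup G)⁆ ≤ (⊤ : Subgroup G).lowerCentralSeries (n + 2) := by
  have : (commutator G : Subgroup G) = ⁅(⊤ : Subgroup G), ⊤⁆ := rfl
  rw [Subgroup.commutator_comm, this]
  apply three_subgroups
  · rw [Subgroup.commutator_comm (⊤ : Subgroup G)]
    exact le_of_eq rfl
  · exact le_of_eq rfl

/-- Let `F₃` be the free group on `x₁, x₂, x₃` and `F₆` the free group on
`y₁, z₁, y₂, z₂, y₃, z₃` (here `Fin 6`, with `yᵢ = of (2i)` and `zᵢ = of (2i+1)` for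
`i = 0, 1, 2`). If `η : F₃ → F₆` is the homomorphism with `η(xᵢ) = ⁅yᵢ, zᵢ⁆`, then for every
`k ≥ 1`, `η` maps the `k`-th term of the lower central series of `F₃` into the `2k`-th term
of the lower central series of `F₆` (in Mathlib's indexing, `lowerCentralSeries G m` is the
`(m+1)`-st term `G_(m+1)`). -/
theorem stmt13 (η : FreeGroup (Fin 3) →* FreeGroup (Fin 6))
    (hη : ∀ i : Fin 3, η (FreeGroup.of i) =
      ⁅FreeGroup.of (⟨2 * i.1, by have := i.isLt; omega⟩ : Fin 6),
       FreeGroup.of (⟨2 * i.1 + 1, by have := i.isLt; omega⟩ : Fin 6)⁆)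
    (k : ℕ) (hk : 1 ≤ k) :
    Subgroup.map η ((⊤ : Subgroup (FreeGroup (Fin 3))).lowerCentralSeries (k - 1)) ≤
      (⊤ : Subgroup (FreeGroup (Fin 6))).lowerCentralSeries (2 * k - 1) := by
  have base : Subgroup.map η ⊤ ≤ commutator (FreeGroup (Fin 6)) := by
    rw [← FreeGroup.closure_range_of (Fin 3), MonoidHom.map_closure, Subgroup.closure_le]
    rintro _ ⟨_, ⟨i, rfl⟩, rfl⟩
    rw [hη]
    exact Subgroup.commutator_mem_commutator (Subgroup.mem_top _) (Subgroup.mem_top _)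
  have aux : ∀ n : ℕ, Subgroup.map η ((⊤ : Subgroup (FreeGroup (Fin 3))).lowerCentralSeries n) ≤
      (⊤ : Subgroup (FreeGroup (Fin 6))).lowerCentralSeries (2 * n + 1) := by
    intro n
    induction n with
    | zero => exact base
    | succ n ih =>
      show Subgroup.map η ⁅(⊤ : Subgroup (FreeGroup (Fin 3))).lowerCentralSeries n, ⊤⁆ ≤ _
      rw [Subgroup.map_commutator]
      calc ⁅Subgroup.map η ((⊤ : Subgroup (FreeGroup (Fin 3))).lowerCentralSeries n), Subgroup.map η ⊤⁆
          ≤ ⁅(⊤ : Subgroup (FreeGroup (Fin 6))).lowerCentralSeries (2 * n + 1),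
             (commutator (FreeGroup (Fin 6)) : Subgroup _)⁆ :=
            Subgroup.commutator_mono ih base
        _ ≤ (⊤ : Subgroup (FreeGroup (Fin 6))).lowerCentralSeries (2 * n + 1 + 2) := lcs_comm_comm _
        _ = (⊤ : Subgroup (FreeGroup (Fin 6))).lowerCentralSeries (2 * (n + 1) + 1) := by ring_nf
  have := aux (k - 1)
  have h2 : 2 * (k - 1) + 1 = 2 * k - 1 := by omega
  rwa [h2] at this
end
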